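/- Let q ≥ 1, r : Fin q → ℕ with each r k ≥ 1, A = Π k, ZMod (r k), and ω_k = exp(2πi/(r k)). Let n ≥ 1. For e : Finset (Fin n) and s : Π k, ℕ, let K^{(e,s)} : Matrix (Fin n → A) (Fin n → A) ℂ be the permutation matrix with K^{(e,s)} j i = 1 if (for every t ∈ e and every k, j t k = i t k + s k, and j t = i t for t ∉ e), else 0. Let E be a finite set of pairs (e, s) with e nonempty and s not identically 0 mod the r k, let α : E → ℝ, λ = Σ α(e,s), and π⋆ i = (Π_k r k)^{−1} if i is constant, else 0. Let P = exp((−λ) • 1 + Σ_{(e,s)∈E} α(e,s) • K^{(e,s)}).mulVec π⋆, and F j i = Π_k ω_k^{Σ_t (i t k).val·(j t k).val}. Then for every i : Fin n → A: if Σ_t i t k = 0 in ZMod (r k) for every k, then (F.mulVec P) i = exp(Σ_{(e,s)∈E} α(e,s)·((Π_k ω_k^{s k·Σ_{t∈e}(i t k).val}) − 1)), and otherwise (F.mulVec P) i = 0. -/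

import Mathlib

open Matrix
open NormedSpace -- for `exp`

lemma pow_mod_of_pow_eq_one (ζ : ℂ) (r : ℕ) (h : ζ ^ r = 1) (m : ℕ) :
    ζ ^ m = ζ ^ (m % r) := by
  conv_lhs => rw [← Nat.div_add_mod m r]
  rw [pow_add, pow_mul, h, one_pow, one_mul]

lemma pow_eq_pow_of_cast_eq (ζ : ℂ) (r : ℕ) [NeZero r] (h : ζ ^ r = 1) {a b : ℕ}
    (hab : (a : ZMod r) = (b : ZMod r)) : ζ ^ a = ζ ^ b := by
  rw [pow_mod_of_pow_eq_one ζ r h a, pow_mod_of_pow_eq_one ζ r h b]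
  have := (ZMod.natCast_eq_natCast_iff a b r).mp hab
  rw [Nat.ModEq] at this
  rw [this]

lemma vecMul_matsmul {ι : Type*} [Fintype ι] (v : ι → ℂ) (a : ℂ) (M : Matrix ι ι ℂ) :
    v ᵥ* (a • M) = a • (v ᵥ* M) := by
  ext j
  simp [Matrix.vecMul, dotProduct, Finset.mul_sum]
  congr 1; funext i; ring

lemma vecMul_finsetSum {ι β : Type*} [Fintype ι] (s : Finset β) (v : ι → ℂ)
    (A : β → Matrix ι ι ℂ) :
    v ᵥ* (∑ p ∈ s, A p) = ∑ p ∈ s, v ᵥ* A p := by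
  classical
  induction s using Finset.cons_induction with
  | empty => simp
  | cons a s ha ih => rw [Finset.sum_cons, Finset.sum_cons, Matrix.vecMul_add, ih]

lemma vecMul_exp_eq {ι : Type*} [Fintype ι] [DecidableEq ι]
    (v : ι → ℂ) (M : Matrix ι ι ℂ) (c : ℂ)
    (h : v ᵥ* M = c • v) :
    v ᵥ* exp M = Complex.exp c • v := by
  letI : SeminormedRing (Matrix ι ι ℂ) := Matrix.linftyOpSemiNormedRing
  letI : NormedRing (Matrix ι ι ℂ) := Matrix.linftyOpNormedRing
  letI : NormedAlgebra ℂ (Matrix ι ι ℂ) := Matrix.linftyOpNormedAlgebra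
  have hpow : ∀ m : ℕ, v ᵥ* (M ^ m) = (c ^ m) • v := by
    intro m; induction m with
    | zero => simp
    | succ m ih =>
      rw [pow_succ, ← Matrix.vecMul_vecMul, ih, Matrix.smul_vecMul, h, smul_smul, pow_succ]
  let T : Matrix ι ι ℂ →ₗ[ℂ] (ι → ℂ) :=
    { toFun := fun A => v ᵥ* A
      map_add' := fun A B => Matrix.vecMul_add A B v
      map_smul' := fun a A => vecMul_matsmul v a A }
  have hs : Summable (fun m : ℕ => (m.factorial : ℂ)⁻¹ • M ^ m) := expSeries_summable' M
  have key : T (exp M) = ∑' m : ℕ, T ((m.factorial : ℂ)⁻¹ • M ^ m) := by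
    rw [exp_eq_tsum ℂ]
    exact (T.toContinuousLinearMap.map_tsum hs)
  have h2 : v ᵥ* exp M = ∑' m : ℕ, ((m.factorial : ℂ)⁻¹ * c ^ m) • v := by
    rw [show v ᵥ* exp M = T (exp M) from rfl, key]
    congr 1; funext m
    show v ᵥ* ((m.factorial : ℂ)⁻¹ • M ^ m) = _
    rw [vecMul_matsmul, hpow, smul_smul]
  have hsc : Summable (fun m : ℕ => (m.factorial : ℂ)⁻¹ * c ^ m) := by
    simpa [smul_eq_mul] using expSeries_summable' (𝕂 := ℂ) c
  have hce : Complex.exp c = ∑' m : ℕ, (m.factorial : ℂ)⁻¹ * c ^ m := by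
    rw [Complex.exp_eq_exp_ℂ, exp_eq_tsum (𝕂 := ℂ)]
    exact tsum_congr fun m => (smul_eq_mul _ _).symm
  rw [h2, hsc.tsum_smul_const v, hce]

lemma sum_zmod_pow (r : ℕ) [NeZero r] (ζ : ℂ) :
    ∑ a : ZMod r, ζ ^ a.val = ∑ j ∈ Finset.range r, ζ ^ j := by
  refine Finset.sum_nbij' (fun a => a.val) (fun j => (j : ZMod r)) ?_ ?_ ?_ ?_ ?_
  · intro a _; exact Finset.mem_range.mpr (ZMod.val_lt a)
  · intro j _; exact Finset.mem_univ _
  · intro a _; exact ZMod.natCast_zmod_val a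
  · intro j hj; exact ZMod.val_cast_of_lt (Finset.mem_range.mp hj)
  · intro a _; rfl

/-- First part of the inversion of an arbitrary abelian group-based model
`G = ∏_k ℤ_{r_k}`: the Fourier transform of a phylogenetic tensor has components
`exp(Σ_{(e,s)∈E} α(e,s)·((Π_k ω_k^{s k·Σ_{t∈e}(i t k).val}) − 1))` on index strings whose
coordinatewise sums vanish, and `0` otherwise. -/
theorem abelian_model_fourier_components
    (q : ℕ) (hq : 1 ≤ q) (r : Fin q → ℕ) [∀ k, NeZero (r k)] (hr : ∀ k, 1 ≤ r k)
    (n : ℕ) (hn : 1 ≤ n)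
    (ω : Fin q → ℂ) (hω : ∀ k, ω k = Complex.exp (2 * Real.pi * Complex.I / (r k)))
    (K : Finset (Fin n) → (∀ k : Fin q, ℕ) →
      Matrix (Fin n → ∀ k, ZMod (r k)) (Fin n → ∀ k, ZMod (r k)) ℂ)
    (hK : ∀ (e : Finset (Fin n)) (s : ∀ k : Fin q, ℕ) (j i : Fin n → ∀ k, ZMod (r k)),
      K e s j i =
        if (∀ t ∈ e, ∀ k : Fin q, j t k = i t k + (s k : ZMod (r k))) ∧
           (∀ t ∉ e, j t = i t)
        then 1 else 0)
    (E : Finset (Finset (Fin n) × (∀ k : Fin q, ℕ)))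
    (hE : ∀ p ∈ E, p.1.Nonempty ∧ ¬(∀ k : Fin q, (p.2 k : ZMod (r k)) = 0))
    (α : Finset (Fin n) × (∀ k : Fin q, ℕ) → ℝ)
    (lam : ℝ) (hlam : lam = ∑ p ∈ E, α p)
    (πs : (Fin n → ∀ k, ZMod (r k)) → ℂ)
    (hπ : ∀ i : Fin n → ∀ k, ZMod (r k),
      πs i = if ∃ c, ∀ t : Fin n, i t = c then (∏ k : Fin q, (r k : ℂ))⁻¹ else 0)
    (P : (Fin n → ∀ k, ZMod (r k)) → ℂ)
    (hP : P = (exp ((-lam : ℂ) •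
          (1 : Matrix (Fin n → ∀ k, ZMod (r k)) (Fin n → ∀ k, ZMod (r k)) ℂ)
        + ∑ p ∈ E, (α p : ℂ) • K p.1 p.2)).mulVec πs)
    (F : Matrix (Fin n → ∀ k, ZMod (r k)) (Fin n → ∀ k, ZMod (r k)) ℂ)
    (hF : ∀ j i : Fin n → ∀ k, ZMod (r k),
      F j i = ∏ k : Fin q, (ω k) ^ (∑ t : Fin n, (i t k).val * (j t k).val)) :
    ∀ i : Fin n → ∀ k, ZMod (r k),
      F.mulVec P i =
        if ∀ k : Fin q, (∑ t : Fin n, i t k) = 0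
        then Complex.exp (∑ p ∈ E, (α p : ℂ) *
          ((∏ k : Fin q, (ω k) ^ (p.2 k * ∑ t ∈ p.1, (i t k).val)) - 1))
        else 0 := by
  classical
  intro i
  have hprim : ∀ k, IsPrimitiveRoot (ω k) (r k) := fun k => by
    rw [hω k]; exact Complex.isPrimitiveRoot_exp (r k) (NeZero.ne _)
  have hroot : ∀ k, ω k ^ (r k) = 1 := fun k => (hprim k).pow_eq_one
  set v : (Fin n → ∀ k, ZMod (r k)) → ℂ := F i with hvdef
  have hv : ∀ g, v g = ∏ k, ω k ^ (∑ t, (g t k).val * (i t k).val) := fun g => hF i g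
  set μ : Finset (Fin n) × (∀ k : Fin q, ℕ) → ℂ :=
    fun p => ∏ k, ω k ^ (p.2 k * ∑ t ∈ p.1, (i t k).val) with hμdef
  -- eigenvector property
  have heig : ∀ (e : Finset (Fin n)) (s : ∀ k : Fin q, ℕ),
      v ᵥ* K e s = μ (e, s) • v := by
    intro e s
    funext g
    set σ : Fin n → ∀ k, ZMod (r k) :=
      fun t k => if t ∈ e then g t k + (s k : ZMod (r k)) else g t k with hσ
    have hKen : ∀ g', K e s g' g = if g' = σ then 1 else 0 := by
      intro g'
      rw [hK]
      congr 1
      simp only [eq_iff_iff]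
      constructor
      · rintro ⟨h1, h2⟩
        funext t k
        by_cases ht : t ∈ e
        · simp [hσ, ht, h1 t ht k]
        · simp [hσ, ht, congr_fun (h2 t ht) k]
      · rintro rfl
        constructor
        · intro t ht k; simp [hσ, ht]
        · intro t ht; funext k; simp [hσ, ht]
    have hstep : (v ᵥ* K e s) g = v σ := by
      simp only [Matrix.vecMul, dotProduct, hKen, mul_ite, mul_one, mul_zero]
      simp [Finset.sum_ite_eq']
    rw [hstep]
    show v σ = μ (e, s) * v g
    rw [hv, hv, hμdef]
    rw [← Finset.prod_mul_distrib]
    refine Finset.prod_congr rfl fun k _ => ?_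
    rw [← pow_add]
    refine pow_eq_pow_of_cast_eq (ω k) (r k) (hroot k) ?_
    push_cast [ZMod.natCast_val, ZMod.cast_id]
    have expand : ∀ t : Fin n, (σ t k) * (i t k)
        = g t k * i t k + (if t ∈ e then (s k : ZMod (r k)) * i t k else 0) := by
      intro t
      rw [hσ]
      by_cases ht : t ∈ e <;> simp [ht] <;> ring
    rw [Finset.sum_congr rfl fun t _ => expand t, Finset.sum_add_distrib,
      Finset.sum_ite_mem, Finset.univ_inter, Finset.mul_sum]
    ring
  -- the full generator matrix
  set MM : Matrix (Fin n → ∀ k, ZMod (r k)) (Fin n → ∀ k, ZMod (r k)) ℂ :=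
    (-lam : ℂ) • 1 + ∑ p ∈ E, (α p : ℂ) • K p.1 p.2 with hMMdef
  set c : ℂ := (-lam : ℂ) + ∑ p ∈ E, (α p : ℂ) * μ p with hcdef
  have hMM : v ᵥ* MM = c • v := by
    rw [hMMdef, Matrix.vecMul_add, vecMul_matsmul, Matrix.vecMul_one, vecMul_finsetSum]
    have hterm : ∀ p ∈ E, v ᵥ* ((α p : ℂ) • K p.1 p.2) = ((α p : ℂ) * μ p) • v := by
      intro p _
      rw [vecMul_matsmul, heig p.1 p.2, smul_smul]
    rw [Finset.sum_congr rfl hterm, ← Finset.sum_smul, hcdef, add_smul]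
  have key : F.mulVec P i = Complex.exp c * (v ⬝ᵥ πs) := by
    rw [hP]
    show v ⬝ᵥ _ = _
    rw [Matrix.dotProduct_mulVec, vecMul_exp_eq v MM c hMM, smul_dotProduct,
      smul_eq_mul]
  -- dot product with πs
  have hπg : ∀ g : Fin n → ∀ k, ZMod (r k),
      πs g = ∑ cc : ∀ k : Fin q, ZMod (r k),
        if g = (fun _ => cc) then (∏ k : Fin q, (r k : ℂ))⁻¹ else 0 := by
    intro g
    rw [hπ]
    by_cases hg : ∃ c0, ∀ t : Fin n, g t = c0
    · obtain ⟨c0, hc0⟩ := hg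
      rw [if_pos ⟨c0, hc0⟩]
      have hgc : g = fun _ => c0 := funext hc0
      rw [Finset.sum_eq_single c0]
      · rw [if_pos hgc]
      · intro b _ hb
        rw [if_neg]
        intro hgb
        exact hb (by rw [hgc] at hgb; exact (congr_fun hgb ⟨0, hn⟩).symm ▸ rfl)
      · intro h; exact absurd (Finset.mem_univ c0) h
    · rw [if_neg hg]
      refine (Finset.sum_eq_zero fun cc _ => ?_).symm
      rw [if_neg]
      intro hgc
      exact hg ⟨cc, fun t => congr_fun hgc t⟩
  have hdot : v ⬝ᵥ πs
      = (∏ k : Fin q, (r k : ℂ))⁻¹ * ∑ cc : ∀ k : Fin q, ZMod (r k), v (fun _ => cc) := by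
    calc v ⬝ᵥ πs = ∑ g, v g * πs g := rfl
    _ = ∑ g, ∑ cc : ∀ k : Fin q, ZMod (r k),
          if g = (fun _ => cc) then v g * (∏ k : Fin q, (r k : ℂ))⁻¹ else 0 := by
        refine Finset.sum_congr rfl fun g _ => ?_
        rw [hπg g, Finset.mul_sum]
        exact Finset.sum_congr rfl fun cc _ => by rw [mul_ite, mul_zero]
    _ = ∑ cc : ∀ k : Fin q, ZMod (r k), ∑ g,
          if g = (fun _ => cc) then v g * (∏ k : Fin q, (r k : ℂ))⁻¹ else 0 :=
        Finset.sum_comm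
    _ = ∑ cc : ∀ k : Fin q, ZMod (r k), v (fun _ => cc) * (∏ k : Fin q, (r k : ℂ))⁻¹ := by
        refine Finset.sum_congr rfl fun cc _ => ?_
        rw [Finset.sum_ite_eq' Finset.univ (fun _ => cc)
          (fun g => v g * (∏ k : Fin q, (r k : ℂ))⁻¹), if_pos (Finset.mem_univ _)]
    _ = _ := by rw [← Finset.sum_mul, mul_comm]
  have hsum : ∑ cc : ∀ k : Fin q, ZMod (r k), v (fun _ => cc)
      = ∏ k : Fin q, ∑ a : ZMod (r k), (ω k ^ (∑ t : Fin n, (i t k).val)) ^ a.val := by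
    have hvc : ∀ cc : ∀ k : Fin q, ZMod (r k),
        v (fun _ => cc) = ∏ k, (ω k ^ (∑ t : Fin n, (i t k).val)) ^ (cc k).val := by
      intro cc
      rw [hv]
      exact Finset.prod_congr rfl fun k _ => by rw [← Finset.mul_sum, pow_mul']
    rw [Finset.sum_congr rfl fun cc _ => hvc cc]
    rw [show (Finset.univ : Finset (∀ k : Fin q, ZMod (r k)))
        = Fintype.piFinset fun _ => Finset.univ from (Fintype.piFinset_univ).symm]
    exact (Finset.prod_univ_sum (fun _ => Finset.univ)
      fun (k : Fin q) (a : ZMod (r k)) => (ω k ^ ∑ t : Fin n, (i t k).val) ^ a.val).symm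
  have hgeo : ∀ k : Fin q,
      (∑ a : ZMod (r k), (ω k ^ (∑ t : Fin n, (i t k).val)) ^ a.val)
      = if (∑ t : Fin n, i t k) = 0 then (r k : ℂ) else 0 := by
    intro k
    have hcast : (((∑ t : Fin n, (i t k).val : ℕ)) : ZMod (r k)) = ∑ t : Fin n, i t k := by
      rw [Nat.cast_sum]
      exact Finset.sum_congr rfl fun t _ => ZMod.natCast_zmod_val _
    have hiff : ω k ^ (∑ t : Fin n, (i t k).val) = 1 ↔ (∑ t : Fin n, i t k) = 0 := by
      rw [(hprim k).pow_eq_one_iff_dvd, ← ZMod.natCast_eq_zero_iff, hcast]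
    rw [sum_zmod_pow]
    by_cases h1 : ω k ^ (∑ t : Fin n, (i t k).val) = 1
    · rw [if_pos (hiff.mp h1)]
      simp [h1]
    · rw [if_neg fun hz => h1 (hiff.mpr hz)]
      rw [geom_sum_eq h1]
      rw [← pow_mul, mul_comm, pow_mul, hroot k, one_pow, sub_self, zero_div]
  -- conclude
  rw [key, hdot, hsum]
  have hprodne : (∏ k : Fin q, (r k : ℂ)) ≠ 0 :=
    Finset.prod_ne_zero_iff.mpr fun k _ => Nat.cast_ne_zero.mpr (NeZero.ne _)
  by_cases hzero : ∀ k : Fin q, (∑ t : Fin n, i t k) = 0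
  · rw [if_pos hzero]
    have : ∏ k : Fin q, (∑ a : ZMod (r k), (ω k ^ (∑ t : Fin n, (i t k).val)) ^ a.val)
        = ∏ k : Fin q, (r k : ℂ) := by
      refine Finset.prod_congr rfl fun k _ => ?_
      rw [hgeo k, if_pos (hzero k)]
    rw [this, inv_mul_cancel₀ hprodne, mul_one]
    congr 1
    rw [hcdef, hlam]
    push_cast
    rw [Finset.sum_congr rfl (fun p _ => by rw [mul_sub, mul_one] :
      ∀ p ∈ E, (α p : ℂ) * (μ p - 1) = (α p : ℂ) * μ p - (α p : ℂ))]
    rw [Finset.sum_sub_distrib]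
    ring
  · rw [if_neg hzero]
    obtain ⟨k0, hk0⟩ := not_forall.mp hzero
    have hz : (∑ a : ZMod (r k0), (ω k0 ^ ∑ t : Fin n, (i t k0).val) ^ a.val) = 0 := by
      rw [hgeo k0, if_neg hk0]
    have hzz : ∏ k : Fin q, (∑ a : ZMod (r k), (ω k ^ ∑ t : Fin n, (i t k).val) ^ a.val)
        = 0 := Finset.prod_eq_zero (Finset.mem_univ k0) hz
    rw [hzz]
    ring
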